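/- Let $r \ge 2$, $k \ge 1$, and $n$ satisfy $(r-1)n \ge rk$. If $\mathcal{F}$ is a family of $k$-element subsets of $[n]$ such that $F_1 \cap F_2 \cap \cdots \cap F_r \ne \emptyset$ for all $F_1, \dots, F_r \in \mathcal{F}$ (not necessarily distinct), then $|\mathcal{F}| \le \binom{n-1}{k-1}$. -/

import Mathlib

open Finset

private lemma sum_min_aux (m k : ℕ) :
    ∀ t, ∑ j ∈ Finset.range t, min m (k - j * m) = min k (t * m) := by
  intro t
  induction t with
  | zero => simp
  | succ t ih =>
    rw [Finset.sum_range_succ, ih]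
    rcases le_or_gt k (t * m) with h | h
    · have h0 : k - t * m = 0 := Nat.sub_eq_zero_of_le h
      rw [h0]
      simp only [Nat.min_zero, Nat.add_zero]
      have hm : (t + 1) * m = t * m + m := by ring
      omega
    · have : min k (t * m) = t * m := min_eq_right h.le
      rw [this]
      have hm : (t + 1) * m = t * m + m := by ring
      rcases le_or_gt m (k - t * m) with h2 | h2
      · rw [min_eq_left h2, min_eq_right (by omega)]
        omega
      · rw [min_eq_right h2.le, min_eq_left (by omega)]
        omega

private lemma card_filter_Ico {n : ℕ} (a b : ℕ) (hb : b ≤ n) :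
    #(Finset.univ.filter fun x : Fin n => a ≤ x.val ∧ x.val < b) = b - a := by
  rw [← Nat.card_Ico a b]
  apply Finset.card_bij (fun (x : Fin n) _ => x.val)
  · intro x hx
    simp only [Finset.mem_filter] at hx
    simp [Finset.mem_Ico, hx.2.1, hx.2.2]
  · intro x hx y hy hxy
    exact Fin.ext hxy
  · intro y hy
    rw [Finset.mem_Ico] at hy
    exact ⟨⟨y, lt_of_lt_of_le hy.2 hb⟩, by simp [hy.1, hy.2], rfl⟩

private lemma locate (s : ℕ → ℕ) :
    ∀ t x, x < ∑ j ∈ Finset.range t, s j →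
    ∃ j < t, (∑ i ∈ Finset.range j, s i) ≤ x ∧ x < (∑ i ∈ Finset.range j, s i) + s j := by
  intro t
  induction t with
  | zero => simp
  | succ t ih =>
    intro x hx
    rcases lt_or_ge x (∑ j ∈ Finset.range t, s j) with h | h
    · obtain ⟨j, hj, h1, h2⟩ := ih x h
      exact ⟨j, by omega, h1, h2⟩
    · refine ⟨t, by omega, h, ?_⟩
      rwa [Finset.sum_range_succ] at hx

private lemma exists_perm_image {α : Type*} [Fintype α] [DecidableEq α] {S S' : Finset α}
    (h : S.card = S'.card) : ∃ τ : Equiv.Perm α, S.image τ = S' := by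
  have h1 : Fintype.card {x // x ∈ S} = Fintype.card {x // x ∈ S'} := by
    simp [Fintype.card_coe, h]
  have h2 : Fintype.card {x // ¬ x ∈ S} = Fintype.card {x // ¬ x ∈ S'} := by
    rw [Fintype.card_subtype_compl, Fintype.card_subtype_compl, h1]
  let e1 := Fintype.equivOfCardEq h1
  let e2 := Fintype.equivOfCardEq h2
  let τ : Equiv.Perm α :=
    ((Equiv.sumCompl (· ∈ S)).symm.trans ((e1.sumCongr e2).trans (Equiv.sumCompl (· ∈ S'))))
  have hτ : ∀ x ∈ S, τ x ∈ S' := by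
    intro x hx
    have : (Equiv.sumCompl (· ∈ S)).symm x = Sum.inl ⟨x, hx⟩ :=
      Equiv.sumCompl_symm_apply_of_pos hx
    simp only [τ, Equiv.trans_apply, this, Equiv.sumCongr_apply, Sum.map_inl,
      Equiv.sumCompl_apply_inl]
    exact (e1 ⟨x, hx⟩).2
  refine ⟨τ, Finset.eq_of_subset_of_card_le ?_ ?_⟩
  · intro y hy
    rw [Finset.mem_image] at hy
    obtain ⟨x, hx, rfl⟩ := hy
    exact hτ x hx
  · rw [Finset.card_image_of_injective _ τ.injective, h]

private lemma card_fiber_eq {n : ℕ} (D S S' : Finset (Fin n))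
    (hS : S.card = S'.card) :
    #(Finset.univ.filter fun σ : Equiv.Perm (Fin n) => D.image σ = S)
      = #(Finset.univ.filter fun σ : Equiv.Perm (Fin n) => D.image σ = S') := by
  obtain ⟨τ, hτ⟩ := exists_perm_image hS
  apply Finset.card_bij (fun σ _ => σ.trans τ)
  · intro σ hσ
    simp only [Finset.mem_filter, Finset.mem_univ, true_and] at hσ ⊢
    rw [show ⇑(σ.trans τ) = ⇑τ ∘ ⇑σ from rfl, ← Finset.image_image, hσ, hτ]
  · intro a _ b _ hab
    have ha : a = (a.trans τ).trans τ.symm := by ext x; simp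
    rw [ha, hab]; ext x; simp
  · intro ρ hρ
    refine ⟨ρ.trans τ.symm, ?_, by ext x; simp⟩
    simp only [Finset.mem_filter, Finset.mem_univ, true_and] at hρ ⊢
    rw [show ⇑(ρ.trans τ.symm) = ⇑τ.symm ∘ ⇑ρ from rfl, ← Finset.image_image, hρ, ← hτ,
      Finset.image_image]
    simp [Finset.image_image]

private lemma perm_sum {n : ℕ} (D : Finset (Fin n)) (f : Finset (Fin n) → ℕ) :
    ∑ σ : Equiv.Perm (Fin n), f (D.image σ) =
      (∑ S ∈ Finset.powersetCard D.card Finset.univ, f S) *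
        #(Finset.univ.filter fun σ : Equiv.Perm (Fin n) => D.image σ = D) := by
  have hmaps : ∀ σ ∈ (Finset.univ : Finset (Equiv.Perm (Fin n))),
      D.image σ ∈ Finset.powersetCard D.card Finset.univ := by
    intro σ _
    rw [Finset.mem_powersetCard_univ]
    exact Finset.card_image_of_injective _ σ.injective
  rw [← Finset.sum_fiberwise_of_maps_to hmaps (fun σ => f (D.image σ))]
  rw [Finset.sum_mul]
  apply Finset.sum_congr rfl
  intro S hS
  rw [Finset.mem_powersetCard_univ] at hS
  have : ∀ σ ∈ Finset.univ.filter
      (fun σ : Equiv.Perm (Fin n) => D.image σ = S), f (D.image σ) = f S := by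
    intro σ hσ
    rw [Finset.mem_filter] at hσ
    rw [hσ.2]
  rw [Finset.sum_congr rfl this, Finset.sum_const, smul_eq_mul, mul_comm]
  congr 1
  exact card_fiber_eq D S D (by rw [hS])

set_option maxHeartbeats 2000000

theorem stmt_4 (n k r : ℕ) (hr : 2 ≤ r) (hk : 1 ≤ k)
    (hn : r * k ≤ (r - 1) * n)
    (F : Finset (Finset (Fin n)))
    (huniform : ∀ A ∈ F, A.card = k)
    (hint : ∀ f : Fin r → Finset (Fin n), (∀ i, f i ∈ F) →
      (Finset.univ.inf f).Nonempty) :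
    F.card ≤ (n - 1).choose (k - 1) := by
  classical
  -- Basic parameter facts
  have hn0 : 1 ≤ n := by
    rcases Nat.eq_zero_or_pos n with h | h
    · subst h
      rw [Nat.mul_zero] at hn
      rcases Nat.mul_eq_zero.1 (Nat.eq_zero_of_le_zero hn) with h | h <;> omega
    · exact h
  have hkn : k < n := by
    by_contra h
    push_neg at h
    have h1 : r * n ≤ r * k := Nat.mul_le_mul_left r h
    have h2 : (r - 1) * n + n = r * n := by
      rw [← Nat.succ_mul, Nat.succ_eq_add_one]
      congr 1
      omega
    omega
  set m : ℕ := n - k with hm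
  have hm1 : 1 ≤ m := by omega
  have hmn : m ≤ n - 1 := by omega
  have hkm : k ≤ (r - 1) * m := by
    have e1 : (r - 1) * m + (r - 1) * k = (r - 1) * n := by
      rw [← Nat.mul_add]; congr 1; omega
    have e2 : (r - 1) * k + k = r * k := by
      rw [← Nat.succ_mul, Nat.succ_eq_add_one]; congr 1; omega
    omega
  -- block sizes
  set sz : ℕ → ℕ := fun j => if j = 0 then m else min m (k - (j - 1) * m) with hsz
  have hsz_le : ∀ j, sz j ≤ m := by
    intro j
    rw [hsz]
    dsimp only
    split
    · exact le_refl m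
    · exact min_le_left _ _
  have hsz0 : sz 0 = m := by rw [hsz]; simp
  set pp : ℕ → ℕ := fun j => ∑ i ∈ Finset.range j, sz i with hpp
  have hptot : pp r = n := by
    obtain ⟨t, rfl⟩ : ∃ t, r = t + 1 := ⟨r - 1, by omega⟩
    rw [hpp]
    dsimp only
    rw [Finset.sum_range_succ']
    have e1 : ∀ i, sz (i + 1) = min m (k - i * m) := by
      intro i
      rw [hsz]
      simp
    rw [Finset.sum_congr rfl fun i _ => e1 i, sum_min_aux, hsz0]
    have : min k (t * m) = k := min_eq_left (by simpa using hkm)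
    omega
  have hpmono : ∀ j, j < r → pp j + sz j ≤ n := by
    intro j hj
    have h1 : pp j + sz j = pp (j + 1) := by
      rw [hpp]
      dsimp only
      rw [Finset.sum_range_succ]
    have h2 : pp (j + 1) ≤ pp r := by
      rw [hpp]
      exact Finset.sum_le_sum_of_subset (Finset.range_subset_range.2 (by omega))
    omega
  -- the blocks
  set D : Fin r → Finset (Fin n) :=
    fun j => Finset.univ.filter fun x : Fin n =>
      pp j.val ≤ x.val ∧ x.val < pp j.val + sz j.val with hD
  have hDcard : ∀ j : Fin r, #(D j) = sz j.val := by
    intro j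
    rw [hD]
    dsimp only
    rw [card_filter_Ico _ _ (hpmono j.val j.2)]
    omega
  have hcover : ∀ x : Fin n, ∃ j : Fin r, x ∈ D j := by
    intro x
    have hx : x.val < ∑ i ∈ Finset.range r, sz i := by
      have h := hptot
      rw [hpp] at h
      dsimp only at h
      omega
    obtain ⟨j, hj, h1, h2⟩ := locate sz r x.val hx
    refine ⟨⟨j, hj⟩, ?_⟩
    rw [hD]
    dsimp only
    rw [Finset.mem_filter]
    exact ⟨Finset.mem_univ _, h1, h2⟩
  -- the indicator function
  set g : Finset (Fin n) → ℕ := fun S => if ∃ A ∈ F, Disjoint A S then 1 else 0 with hg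
  have hg_le : ∀ S, g S ≤ 1 := by
    intro S
    rw [hg]
    dsimp only
    split <;> omega
  -- Claim A : for every permutation, at most r - 1 blocks are avoidable
  have claimA : ∀ σ : Equiv.Perm (Fin n), ∑ j : Fin r, g ((D j).image σ) ≤ r - 1 := by
    intro σ
    by_cases hall : ∀ j : Fin r, ∃ A ∈ F, Disjoint A ((D j).image σ)
    · exfalso
      choose A hA hdisj using hall
      obtain ⟨x, hx⟩ := hint A hA
      obtain ⟨j, hj⟩ := hcover (σ.symm x)
      have hxj : x ∈ (D j).image σ := Finset.mem_image.2 ⟨σ.symm x, hj, by simp⟩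
      have hsub : Finset.univ.inf A ⊆ A j := Finset.inf_le (Finset.mem_univ j)
      have hxA : x ∈ A j := hsub hx
      exact Finset.disjoint_left.1 (hdisj j) hxA hxj
    · push_neg at hall
      obtain ⟨j0, hj0⟩ := hall
      have hg0 : g ((D j0).image σ) = 0 := by
        rw [hg]
        dsimp only
        rw [if_neg]
        push_neg
        exact hj0
      rw [← Finset.sum_erase_add Finset.univ _ (Finset.mem_univ j0), hg0, Nat.add_zero]
      calc ∑ j ∈ Finset.univ.erase j0, g ((D j).image σ)
          ≤ #(Finset.univ.erase j0) • 1 :=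
            Finset.sum_le_card_nsmul _ _ 1 (fun x _ => hg_le _)
        _ = r - 1 := by
            rw [Finset.card_erase_of_mem (Finset.mem_univ j0), Finset.card_univ,
              Fintype.card_fin, smul_eq_mul, Nat.mul_one]
  -- fiber counts and level sums
  set u : ℕ → ℕ := fun t => ∑ S ∈ Finset.powersetCard t Finset.univ, g S with hu
  set Nf : Fin r → ℕ :=
    fun j => #(Finset.univ.filter fun σ : Equiv.Perm (Fin n) => (D j).image σ = D j) with hNf
  have key1 : ∀ j : Fin r, ∑ σ : Equiv.Perm (Fin n), g ((D j).image σ) = u (sz j.val) * Nf j := by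
    intro j
    have h := perm_sum (D j) g
    rw [hDcard j] at h
    exact h
  have key2 : ∀ j : Fin r, n.choose (sz j.val) * Nf j = n.factorial := by
    intro j
    have h := perm_sum (D j) (fun _ => 1)
    simp only [Finset.sum_const, smul_eq_mul, Nat.mul_one, Finset.card_univ,
      Fintype.card_perm, Fintype.card_fin, Finset.card_powersetCard, hDcard j] at h
    exact h.symm
  -- suppose for contradiction the family is too large
  by_contra hcon
  push_neg at hcon
  have hCsymm : (n - 1).choose (k - 1) = (n - 1).choose m := by
    rw [← Nat.choose_symm (show k - 1 ≤ n - 1 by omega)]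
    congr 1
    omega
  -- the complement family
  set B : Finset (Finset (Fin n)) := F.image fun A => Finset.univ \ A with hB
  have hBcard : #B = #F := by
    rw [hB]
    apply Finset.card_image_of_injective
    intro a b hab
    have := congrArg (fun S => Finset.univ \ S) hab
    simpa [Finset.sdiff_sdiff_eq_self (Finset.subset_univ _)] using this
  have hBsized : (B : Set (Finset (Fin n))).Sized m := by
    intro S hS
    rw [Finset.mem_coe, hB, Finset.mem_image] at hS
    obtain ⟨A, hA, rfl⟩ := hS
    rw [Finset.card_sdiff_of_subset (Finset.subset_univ _), Finset.card_univ, Fintype.card_fin,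
      huniform A hA]
  have hBge : (n - 1).choose m + 1 ≤ #B := by
    rw [hBcard]
    omega
  -- u t as a cardinality
  have hucard : ∀ t, u t =
      #((Finset.powersetCard t Finset.univ).filter fun S => ∃ A ∈ F, Disjoint A S) := by
    intro t
    rw [hu, hg]
    dsimp only
    rw [Finset.sum_boole]
    simp
  -- Kruskal-Katona lower bounds on u
  have hKKu : ∀ t, t ≤ m → (n - 1).choose t ≤ u t := by
    intro t ht
    have hKK := Finset.kruskal_katona_lovasz_form (i := m - t) (r := m) (k := n - 1)
      (by omega) hmn (by omega) hBsized (by omega)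
    rw [show m - (m - t) = t by omega] at hKK
    refine le_trans hKK ?_
    rw [hucard t]
    apply Finset.card_le_card
    intro T hT
    obtain ⟨S, hS, hTS, hsd⟩ :=
      (@Finset.mem_shadow_iterate_iff_exists_mem_card_add (Fin n)
        (fun a b => instDecidableEqFin n a b) B T (m - t)).1 hT
    have hScard : #S = m := hBsized (Finset.mem_coe.2 hS)
    have hTcard : #T = t := by omega
    rw [hB, Finset.mem_image] at hS
    obtain ⟨A, hA, rfl⟩ := hS
    refine Finset.mem_filter.2 ⟨Finset.mem_powersetCard_univ.2 hTcard, A, hA, ?_⟩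
    exact Finset.disjoint_left.2 fun x hxA hxT => (Finset.mem_sdiff.1 (hTS hxT)).2 hxA
  have hum : (n - 1).choose m + 1 ≤ u m := by
    refine le_trans hBge ?_
    rw [hucard m]
    apply Finset.card_le_card
    intro S hS
    rw [hB, Finset.mem_image] at hS
    obtain ⟨A, hA, rfl⟩ := hS
    refine Finset.mem_filter.2 ⟨Finset.mem_powersetCard_univ.2 ?_, A, hA, Finset.disjoint_sdiff⟩
    rw [Finset.card_sdiff_of_subset (Finset.subset_univ _), Finset.card_univ, Fintype.card_fin,
      huniform A hA]
  -- the main double counting inequality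
  have hswap : ∑ j : Fin r, u (sz j.val) * Nf j ≤ (r - 1) * n.factorial := by
    calc ∑ j : Fin r, u (sz j.val) * Nf j
        = ∑ j : Fin r, ∑ σ : Equiv.Perm (Fin n), g ((D j).image σ) := by
          exact (Finset.sum_congr rfl fun j _ => (key1 j).symm)
      _ = ∑ σ : Equiv.Perm (Fin n), ∑ j : Fin r, g ((D j).image σ) := Finset.sum_comm
      _ ≤ ∑ _σ : Equiv.Perm (Fin n), (r - 1) :=
          Finset.sum_le_sum fun σ _ => claimA σ
      _ = (r - 1) * n.factorial := by
          rw [Finset.sum_const, Finset.card_univ, Fintype.card_perm, Fintype.card_fin,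
            smul_eq_mul, Nat.mul_comm]
  -- positivity of the fiber count at block 0
  have hj0 : (0 : ℕ) < r := by omega
  set j0 : Fin r := ⟨0, hj0⟩ with hj0def
  have hNf0 : 1 ≤ Nf j0 := by
    rcases Nat.eq_zero_or_pos (Nf j0) with h | h
    · exfalso
      have := key2 j0
      rw [h, Nat.mul_zero] at this
      exact absurd this.symm (Nat.factorial_ne_zero n)
    · exact h
  -- lower bound for the sum
  have hlow : (∑ j : Fin r, (n - 1).choose (sz j.val) * Nf j) + Nf j0
      ≤ ∑ j : Fin r, u (sz j.val) * Nf j := by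
    have step : ∀ j ∈ (Finset.univ : Finset (Fin r)),
        (n - 1).choose (sz j.val) * Nf j + (if j = j0 then Nf j else 0)
          ≤ u (sz j.val) * Nf j := by
      intro j _
      by_cases hj : j = j0
      · rw [hj, if_pos rfl]
        have hszj : sz j0.val = m := by
          rw [show j0.val = 0 from rfl, hsz0]
        rw [hszj]
        calc (n - 1).choose m * Nf j0 + Nf j0 = ((n - 1).choose m + 1) * Nf j0 := by ring
          _ ≤ u m * Nf j0 := Nat.mul_le_mul_right _ hum
      · rw [if_neg hj, Nat.add_zero]
        exact Nat.mul_le_mul_right _ (hKKu _ (hsz_le _))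
    calc (∑ j : Fin r, (n - 1).choose (sz j.val) * Nf j) + Nf j0
        = ∑ j : Fin r, ((n - 1).choose (sz j.val) * Nf j + (if j = j0 then Nf j else 0)) := by
          rw [Finset.sum_add_distrib, Finset.sum_ite_eq' Finset.univ j0 (fun j => Nf j),
            if_pos (Finset.mem_univ _)]
      _ ≤ ∑ j : Fin r, u (sz j.val) * Nf j := Finset.sum_le_sum step
  -- scaling identity
  have hscale : ∀ j : Fin r,
      n * ((n - 1).choose (sz j.val) * Nf j) = (n - sz j.val) * n.factorial := by
    intro j
    have hsn : sz j.val ≤ n - 1 := le_trans (hsz_le _) hmn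
    have h1 : n * (n - 1).choose (sz j.val) = (n - sz j.val) * n.choose (sz j.val) := by
      have e1 : n * (n - 1).choose (sz j.val)
          = Nat.succ (n - 1) * (n - 1).choose (sz j.val) := by
        congr 1
        omega
      rw [e1, Nat.add_one_mul_choose_eq]
      have e2 : n - 1 + 1 = n := by omega
      rw [e2, Nat.choose_succ_right_eq]
      exact Nat.mul_comm _ _
    calc n * ((n - 1).choose (sz j.val) * Nf j)
        = (n * (n - 1).choose (sz j.val)) * Nf j := by ring
      _ = ((n - sz j.val) * n.choose (sz j.val)) * Nf j := by rw [h1]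
      _ = (n - sz j.val) * (n.choose (sz j.val) * Nf j) := by ring
      _ = (n - sz j.val) * n.factorial := by rw [key2 j]
  have hsumsz : ∑ j : Fin r, (n - sz j.val) = (r - 1) * n := by
    have h1 : ∑ j : Fin r, sz j.val = n := by
      rw [Fin.sum_univ_eq_sum_range (fun i => sz i) r]
      have h := hptot
      rw [hpp] at h
      exact h
    have h2 : ∑ j : Fin r, ((n - sz j.val) + sz j.val) = ∑ _j : Fin r, n :=
      Finset.sum_congr rfl fun j _ => Nat.sub_add_cancel (le_trans (hsz_le _) (by omega))
    rw [Finset.sum_add_distrib, h1, Finset.sum_const, Finset.card_univ, Fintype.card_fin,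
      smul_eq_mul] at h2
    have h3 : (r - 1) * n + n = r * n := by
      rw [← Nat.succ_mul, Nat.succ_eq_add_one]
      congr 1
      omega
    omega
  -- combine everything
  have final : (r - 1) * n * n.factorial + n * Nf j0 ≤ (r - 1) * n * n.factorial := by
    calc (r - 1) * n * n.factorial + n * Nf j0
        = (∑ j : Fin r, (n - sz j.val)) * n.factorial + n * Nf j0 := by rw [hsumsz]
      _ = (∑ j : Fin r, (n - sz j.val) * n.factorial) + n * Nf j0 := by
          rw [Finset.sum_mul]
      _ = (∑ j : Fin r, n * ((n - 1).choose (sz j.val) * Nf j)) + n * Nf j0 := by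
          rw [Finset.sum_congr rfl fun j _ => (hscale j).symm]
      _ = n * ((∑ j : Fin r, (n - 1).choose (sz j.val) * Nf j) + Nf j0) := by
          rw [Nat.mul_add, Finset.mul_sum]
      _ ≤ n * (∑ j : Fin r, u (sz j.val) * Nf j) := Nat.mul_le_mul_left n hlow
      _ ≤ n * ((r - 1) * n.factorial) := Nat.mul_le_mul_left n hswap
      _ = (r - 1) * n * n.factorial := by ring
  have hpos : 1 ≤ n * Nf j0 := Nat.one_le_iff_ne_zero.2 (by positivity)
  omega
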